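/- arXiv:2510.22993 — 3 statements merged into one kernel-verified Lean document; each statement's English description precedes it below -/
import Mathlib

section
/- Let X and Y be types, D a probability distribution (PMF) over X, f : X → Y a function, G a finite set of functions X → Y, ε ∈ [0,1], and k ∈ ℕ. Then the probability, over k independent draws x_1, …, x_k from D, that there exists g ∈ G with Pr_{x~D}[g(x) ≠ f(x)] ≥ ε and g(x_i) = f(x_i) for all i ∈ {1,…,k}, is at most |G| · (1 − ε)^k. -/
lemma tsum_pi_prod {X : Type*} (k : ℕ) (p : X → ENNReal) :
    ∑' v : Fin k → X, ∏ i, p (v i) = (∑' x, p x) ^ k := by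
  induction k with
  | zero =>
    simp only [pow_zero, Finset.univ_eq_empty, Finset.prod_empty]
    rw [tsum_eq_single (Fin.elim0 : Fin 0 → X)]
    intro b hb
    exact absurd (Subsingleton.elim b _) hb
  | succ n ih =>
    rw [← (Fin.consEquiv (fun _ : Fin (n+1) => X)).tsum_eq]
    simp only [Fin.consEquiv_apply]
    rw [ENNReal.tsum_prod']
    simp only [Fin.prod_univ_succ, Fin.cons_zero, Fin.cons_succ]
    rw [pow_succ, mul_comm ((∑' x, p x) ^ n)]
    calc ∑' (a : X), ∑' (b : Fin n → X), p a * ∏ i, p (b i)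
        = ∑' (a : X), p a * ∑' (b : Fin n → X), ∏ i, p (b i) := by
          simp [ENNReal.tsum_mul_left]
      _ = (∑' x, p x) * (∑' x, p x) ^ n := by rw [← ih, ENNReal.tsum_mul_right]

/-- Over `k` i.i.d. draws from `D`, the probability that some `g` in the
finite class `G` has error `Pr_{x~D}[g x ≠ f x] ≥ ε` yet is consistent with all `k`
labeled samples is at most `|G| * (1 - ε)^k`. -/
theorem union_bound_consistency {X Y : Type*} (D : PMF X) (f : X → Y)
    (G : Finset (X → Y)) (ε : ENNReal) (hε : ε ≤ 1) (k : ℕ) :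
    ∑' v : Fin k → X,
      Set.indicator {v : Fin k → X |
          ∃ g ∈ G, ε ≤ D.toOuterMeasure {x | g x ≠ f x} ∧ ∀ i, g (v i) = f (v i)}
        (fun v => ∏ i, D (v i)) v ≤ (G.card : ENNReal) * (1 - ε) ^ k := by
  classical
  set G' : Finset (X → Y) := G.filter (fun g => ε ≤ D.toOuterMeasure {x | g x ≠ f x}) with hG'
  have hstep : ∀ v : Fin k → X,
      Set.indicator {v : Fin k → X |
          ∃ g ∈ G, ε ≤ D.toOuterMeasure {x | g x ≠ f x} ∧ ∀ i, g (v i) = f (v i)}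
        (fun v => ∏ i, D (v i)) v
      ≤ ∑ g ∈ G', Set.indicator {v : Fin k → X | ∀ i, g (v i) = f (v i)}
          (fun v => ∏ i, D (v i)) v := by
    intro v
    by_cases hv : v ∈ {v : Fin k → X |
        ∃ g ∈ G, ε ≤ D.toOuterMeasure {x | g x ≠ f x} ∧ ∀ i, g (v i) = f (v i)}
    · rw [Set.indicator_of_mem hv]
      obtain ⟨g, hgG, hgε, hgc⟩ := hv
      have hg' : g ∈ G' := Finset.mem_filter.mpr ⟨hgG, hgε⟩
      have : (∏ i, D (v i)) = Set.indicator {v : Fin k → X | ∀ i, g (v i) = f (v i)}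
          (fun v => ∏ i, D (v i)) v :=
        (Set.indicator_of_mem (show v ∈ {v : Fin k → X | ∀ i, g (v i) = f (v i)} from hgc)
          (fun v => ∏ i, D (v i))).symm
      rw [this]
      exact Finset.single_le_sum
        (f := fun g => Set.indicator {v : Fin k → X | ∀ i, g (v i) = f (v i)}
          (fun v => ∏ i, D (v i)) v) (fun _ _ => zero_le) hg'
    · rw [Set.indicator_of_notMem hv]; exact zero_le
  calc ∑' v : Fin k → X, _ ≤ ∑' v : Fin k → X, ∑ g ∈ G',
        Set.indicator {v : Fin k → X | ∀ i, g (v i) = f (v i)}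
          (fun v => ∏ i, D (v i)) v := ENNReal.tsum_le_tsum hstep
    _ = ∑ g ∈ G', ∑' v : Fin k → X,
        Set.indicator {v : Fin k → X | ∀ i, g (v i) = f (v i)}
          (fun v => ∏ i, D (v i)) v := Summable.tsum_finsetSum fun _ _ => ENNReal.summable
    _ ≤ ∑ g ∈ G', (1 - ε) ^ k := by
        apply Finset.sum_le_sum
        intro g hg
        have hgε : ε ≤ D.toOuterMeasure {x | g x ≠ f x} := (Finset.mem_filter.mp hg).2
        have hind : ∀ v : Fin k → X,
            Set.indicator {v : Fin k → X | ∀ i, g (v i) = f (v i)}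
              (fun v => ∏ i, D (v i)) v
            = ∏ i, Set.indicator {x | g x = f x} D (v i) := by
          intro v
          by_cases hv : ∀ i, g (v i) = f (v i)
          · rw [Set.indicator_of_mem (show v ∈ {v : Fin k → X | ∀ i, g (v i) = f (v i)} from hv)]
            exact Finset.prod_congr rfl fun i _ =>
              (Set.indicator_of_mem (show v i ∈ {x | g x = f x} from hv i) (D : X → ENNReal)).symm
          · rw [Set.indicator_of_notMem
              (show v ∉ {v : Fin k → X | ∀ i, g (v i) = f (v i)} from hv)]
            push_neg at hv
            obtain ⟨i, hi⟩ := hv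
            exact (Finset.prod_eq_zero (Finset.mem_univ i)
              (Set.indicator_of_notMem (show v i ∉ {x | g x = f x} from hi)
                (D : X → ENNReal))).symm
        rw [tsum_congr hind, tsum_pi_prod]
        have hsum : D.toOuterMeasure {x | g x = f x}
            + D.toOuterMeasure {x | g x ≠ f x} = 1 := by
          rw [PMF.toOuterMeasure_apply, PMF.toOuterMeasure_apply, ← ENNReal.tsum_add,
            ← D.tsum_coe]
          refine tsum_congr fun x => ?_
          by_cases hx : g x = f x <;>
            simp [Set.indicator_apply, hx]
        have h1 : D.toOuterMeasure {x | g x = f x} ≤ 1 - ε := by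
          have hne : D.toOuterMeasure {x | g x ≠ f x} ≠ ⊤ := by
            intro h
            rw [h] at hsum
            simp at hsum
          rw [ENNReal.eq_sub_of_add_eq hne hsum]
          exact tsub_le_tsub_left hgε 1
        rw [← PMF.toOuterMeasure_apply]
        exact pow_le_pow_left' h1 k
    _ = (G'.card : ENNReal) * (1 - ε) ^ k := by rw [Finset.sum_const, nsmul_eq_mul]
    _ ≤ (G.card : ENNReal) * (1 - ε) ^ k := by
        refine mul_le_mul_left ?_ _
        exact_mod_cast Finset.card_filter_le _ _
end

section
/- Let X be a type, D a probability distribution (PMF) over X, H a finite nonempty set of functions X → X, and ε_0 > 0 such that for all f ≠ g in H, Pr_{x~D}[f(x) ≠ g(x)] > ε_0. Fix f ∈ H, 0 < δ' < 1, and k ∈ ℕ with k ≥ (1/ε_0)·(ln|H| + ln(1/δ')). Then with probability at least 1 − δ' over k independent draws x_1, …, x_k from D, the only g ∈ H satisfying g(x_i) = f(x_i) for all i ∈ {1,…,k} is g = f. -/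
lemma tsum_pi_pow {X : Type*} (h : X → ENNReal) : ∀ k : ℕ,
    ∑' v : Fin k → X, ∏ i, h (v i) = (∑' x, h x) ^ k
  | 0 => by
      have h1 : ∀ v : Fin 0 → X, ∏ i, h (v i) = 1 := fun v => by simp
      simp only [h1, pow_zero]
      exact tsum_eq_single (f := fun _ : Fin 0 → X => (1 : ENNReal)) default
        (fun b hb => absurd (Subsingleton.elim b default) hb)
  | k + 1 => by
      have e := (Fin.consEquiv (fun _ : Fin (k+1) => X)).symm.tsum_eq
        (f := fun p : X × (Fin k → X) => h p.1 * ∏ i, h (p.2 i))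
      have key : ∀ v : Fin (k+1) → X,
          (fun p : X × (Fin k → X) => h p.1 * ∏ i, h (p.2 i)) ((Fin.consEquiv (fun _ : Fin (k+1) => X)).symm v)
            = ∏ i, h (v i) := fun v => by
        simp [Fin.consEquiv, Fin.prod_univ_succ, Fin.tail]
      calc ∑' v : Fin (k+1) → X, ∏ i, h (v i)
          = ∑' p : X × (Fin k → X), h p.1 * ∏ i, h (p.2 i) := by
            rw [← e]; exact tsum_congr fun v => (key v).symm
        _ = ∑' x, ∑' w : Fin k → X, h x * ∏ i, h (w i) :=
            ENNReal.tsum_prod (f := fun x (w : Fin k → X) => h x * ∏ i, h (w i))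
        _ = ∑' x, h x * ∑' w : Fin k → X, ∏ i, h (w i) := by
            exact tsum_congr fun x => ENNReal.tsum_mul_left
        _ = (∑' x, h x) * (∑' x, h x) ^ k := by
            rw [tsum_pi_pow h k, ENNReal.tsum_mul_right]
        _ = (∑' x, h x) ^ (k+1) := (pow_succ' _ _).symm

/-- If the finite class `H` is `ε₀`-distinguishable under `D` (any two
distinct members differ with probability more than `ε₀`), `f ∈ H`, and
`k ≥ (1/ε₀)·(ln|H| + ln(1/δ'))`, then with probability at least `1 − δ'` over `k`
i.i.d. draws from `D`, the only `g ∈ H` consistent with the sample labeled by `f`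
is `f` itself. -/
theorem distinguishable_class_identification {X : Type*} (D : PMF X)
    (H : Finset (X → X)) (hH : H.Nonempty) (ε₀ : ℝ) (hε₀ : 0 < ε₀)
    (hdist : ∀ f ∈ H, ∀ g ∈ H, f ≠ g →
      ENNReal.ofReal ε₀ < D.toOuterMeasure {x | f x ≠ g x})
    (f : X → X) (hf : f ∈ H) (δ' : ℝ) (hδ'0 : 0 < δ') (hδ'1 : δ' < 1)
    (k : ℕ) (hk : (1 / ε₀) * (Real.log H.card + Real.log (1 / δ')) ≤ (k : ℝ)) :
    1 - δ' ≤
      (∑' v : Fin k → X,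
        Set.indicator {v : Fin k → X |
            ∀ g ∈ H, (∀ i, g (v i) = f (v i)) → g = f}
          (fun v => ∏ i, D (v i)) v).toReal := by
  classical
  set S : Set (Fin k → X) :=
    {v : Fin k → X | ∀ g ∈ H, (∀ i, g (v i) = f (v i)) → g = f} with hS
  set P : (Fin k → X) → ENNReal := fun v => ∏ i, D (v i) with hP
  have hPtot : ∑' v, P v = 1 := by
    rw [hP]; rw [tsum_pi_pow (fun x => D x) k, PMF.tsum_coe, one_pow]
  -- the product PMF
  set Q : PMF (Fin k → X) := ⟨P, ENNReal.summable.hasSum_iff.mpr hPtot⟩ with hQ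
  have hQapp : ∀ s : Set (Fin k → X), Q.toOuterMeasure s = ∑' v, s.indicator P v :=
    fun s => Q.toOuterMeasure_apply s
  set T := ∑' v, S.indicator P v with hT
  set Tc := Q.toOuterMeasure Sᶜ with hTc
  -- splitting the total mass
  have hsplit : T + Tc = 1 := by
    rw [hT, hTc, hQapp, ← ENNReal.tsum_add]
    rw [← hPtot]
    exact tsum_congr fun v => by
      by_cases hv : v ∈ S <;>
        simp [Set.indicator_of_mem, Set.indicator_of_notMem, hv]
  have hTc1 : Tc ≤ 1 := le_trans (le_add_self) hsplit.le
  -- the union bound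
  have hsub : Sᶜ ⊆ ⋃ g ∈ H.erase f, {v : Fin k → X | ∀ i, g (v i) = f (v i)} := by
    intro v hv
    simp only [hS, Set.mem_compl_iff, Set.mem_setOf_eq, not_forall] at hv
    obtain ⟨g, hg, hcons, hgf⟩ := hv
    exact Set.mem_biUnion (Finset.mem_erase.mpr ⟨hgf, hg⟩) hcons
  have hunion : Tc ≤ ∑ g ∈ H.erase f,
      Q.toOuterMeasure {v : Fin k → X | ∀ i, g (v i) = f (v i)} :=
    le_trans (MeasureTheory.measure_mono hsub) (MeasureTheory.measure_biUnion_finset_le _ _)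
  -- per-element bound
  have hterm : ∀ g ∈ H.erase f,
      Q.toOuterMeasure {v : Fin k → X | ∀ i, g (v i) = f (v i)}
        ≤ ENNReal.ofReal ((1 - ε₀) ^ k) := by
    intro g hg
    obtain ⟨hgf, hgH⟩ := Finset.mem_erase.mp hg
    set B : Set X := {x | g x = f x} with hB
    have hBc : Bᶜ = {x | g x ≠ f x} := by
      ext x; simp [hB]
    have hlt : ENNReal.ofReal ε₀ < D.toOuterMeasure Bᶜ := by
      rw [hBc]; exact hdist g hgH f hf hgf
    have hDle1 : ∀ s : Set X, D.toOuterMeasure s ≤ 1 := by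
      intro s
      rw [D.toOuterMeasure_apply, ← PMF.tsum_coe D]
      exact ENNReal.tsum_le_tsum fun x => Set.indicator_le_self _ _ x
    have hε₁ : ε₀ < 1 :=
      ENNReal.ofReal_lt_one.mp (lt_of_lt_of_le hlt (hDle1 _))
    -- mass of B
    have hBsplit : D.toOuterMeasure B + D.toOuterMeasure Bᶜ = 1 := by
      rw [D.toOuterMeasure_apply, D.toOuterMeasure_apply, ← ENNReal.tsum_add,
        ← PMF.tsum_coe D]
      exact tsum_congr fun x => by
        by_cases hx : x ∈ B <;>
          simp [Set.indicator_of_mem, Set.indicator_of_notMem, hx]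
    have hqle : D.toOuterMeasure B ≤ ENNReal.ofReal (1 - ε₀) := by
      have h1 : D.toOuterMeasure B = 1 - D.toOuterMeasure Bᶜ :=
        ENNReal.eq_sub_of_add_eq (lt_of_le_of_lt (hDle1 _) ENNReal.one_lt_top).ne
          hBsplit
      have h2 : ENNReal.ofReal (1 - ε₀) = 1 - ENNReal.ofReal ε₀ := by
        rw [ENNReal.ofReal_sub _ hε₀.le, ENNReal.ofReal_one]
      rw [h1, h2]
      exact tsub_le_tsub_left hlt.le _
    -- measure of the consistency event is q^k
    have hA : Q.toOuterMeasure {v : Fin k → X | ∀ i, g (v i) = f (v i)}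
        = (D.toOuterMeasure B) ^ k := by
      rw [hQapp, D.toOuterMeasure_apply, ← tsum_pi_pow (fun x => B.indicator D x) k]
      refine tsum_congr fun v => ?_
      by_cases hv : v ∈ {v : Fin k → X | ∀ i, g (v i) = f (v i)}
      · rw [Set.indicator_of_mem hv]
        exact Finset.prod_congr rfl fun i _ =>
          (Set.indicator_of_mem (show v i ∈ B from hv i) (fun x => D x)).symm
      · rw [Set.indicator_of_notMem hv]
        simp only [Set.mem_setOf_eq, not_forall] at hv
        obtain ⟨i, hi⟩ := hv
        exact (Finset.prod_eq_zero (Finset.mem_univ i)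
          (Set.indicator_of_notMem (show v i ∉ B from hi) (fun x => D x))).symm
    rw [hA, ENNReal.ofReal_pow (by linarith) k]
    exact pow_le_pow_left' hqle k
  -- summing the per-element bounds
  have hTcle : Tc ≤ ENNReal.ofReal δ' := by
    rcases Finset.eq_empty_or_nonempty (H.erase f) with he | he
    · refine le_trans hunion ?_
      rw [he, Finset.sum_empty]
      exact zero_le
    · obtain ⟨g₀, hg₀⟩ := he
      obtain ⟨hg₀f, hg₀H⟩ := Finset.mem_erase.mp hg₀
      have hDle1 : ∀ s : Set X, D.toOuterMeasure s ≤ 1 := by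
        intro s
        rw [D.toOuterMeasure_apply, ← PMF.tsum_coe D]
        exact ENNReal.tsum_le_tsum fun x => Set.indicator_le_self _ _ x
      have hε₁ : ε₀ < 1 := ENNReal.ofReal_lt_one.mp
        (lt_of_lt_of_le (hdist g₀ hg₀H f hf hg₀f) (hDle1 _))
      -- real-number bound
      have hN1 : (1 : ℝ) ≤ (H.card : ℝ) := by
        exact_mod_cast Finset.card_pos.mpr hH
      have hN0 : (0 : ℝ) < (H.card : ℝ) := by linarith
      have hεk : Real.log H.card + Real.log (1 / δ') ≤ ε₀ * k := by
        have h2 := mul_le_mul_of_nonneg_left hk hε₀.le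
        rw [← mul_assoc, mul_one_div, div_self hε₀.ne', one_mul] at h2
        exact h2
      have hpow : (1 - ε₀) ^ k ≤ Real.exp (-(ε₀ * k)) := by
        calc (1 - ε₀) ^ k ≤ (Real.exp (-ε₀)) ^ k := by
              refine pow_le_pow_left₀ (by linarith) ?_ k
              have := Real.add_one_le_exp (-ε₀); linarith
          _ = Real.exp (-(ε₀ * k)) := by
              rw [← Real.exp_nat_mul]; ring_nf
      have hexp : Real.exp (-(ε₀ * k)) ≤ δ' / H.card := by
        have h3 : Real.exp (-(ε₀ * k))
            ≤ Real.exp (-(Real.log H.card + Real.log (1 / δ'))) :=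
          Real.exp_le_exp.mpr (by linarith)
        have h4 : Real.exp (-(Real.log H.card + Real.log (1 / δ')))
            = δ' / H.card := by
          rw [neg_add, Real.exp_add, Real.exp_neg, Real.exp_neg,
            Real.exp_log hN0, Real.exp_log (by positivity)]
          field_simp
        linarith [h3, h4.le, h4.ge]
      have hcard : ((H.erase f).card : ℝ) ≤ (H.card : ℝ) := by
        exact_mod_cast Finset.card_le_card (Finset.erase_subset f H)
      have hreal : ((H.erase f).card : ℝ) * (1 - ε₀) ^ k ≤ δ' := by
        have h5 : (1 - ε₀) ^ k ≤ δ' / H.card := le_trans hpow hexp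
        have h6 : (0 : ℝ) ≤ (1 - ε₀) ^ k := pow_nonneg (by linarith) k
        calc ((H.erase f).card : ℝ) * (1 - ε₀) ^ k
            ≤ (H.card : ℝ) * (δ' / H.card) :=
              mul_le_mul hcard h5 h6 (le_of_lt hN0)
          _ = δ' := by field_simp
      refine le_trans hunion (le_trans (Finset.sum_le_sum hterm) ?_)
      rw [Finset.sum_const, nsmul_eq_mul, ← ENNReal.ofReal_natCast,
        ← ENNReal.ofReal_mul (by positivity)]
      exact ENNReal.ofReal_le_ofReal hreal
  -- conclusion
  have hTeq : T = 1 - Tc :=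
    ENNReal.eq_sub_of_add_eq (lt_of_le_of_lt hTc1 ENNReal.one_lt_top).ne hsplit
  rw [hTeq, ENNReal.toReal_sub_of_le hTc1 ENNReal.one_ne_top,
    ENNReal.toReal_one]
  have : Tc.toReal ≤ δ' := ENNReal.toReal_le_of_le_ofReal hδ'0.le hTcle
  linarith
end

section
/- Fix a finite nonempty vocabulary Σ and set X = List Σ. Let H be a finite nonempty set of functions X → X, let T ≥ 1, let f_1, …, f_T ∈ H, and let f_0 = f_T ∘ ⋯ ∘ f_2 ∘ f_1. Let D_1, …, D_T and D_0 be probability distributions (PMFs) over X, and suppose H is distinguishable with margin ε_0 > 0 under all the relevant input distributions: for all f ≠ g in H, Pr_{x~D_t}[f(x) ≠ g(x)] > ε_0 for every t ∈ {1,…,T}, and Pr_{x~D_0}[f(z_t(x)) ≠ g(z_t(x))] > ε_0 for every t ∈ {1,…,T}, where z_1(x) = x and z_{t}(x) = f_{t−1} ∘ ⋯ ∘ f_1(x) for t ≥ 2. For each t ∈ {1,…,T}, draw k_t i.i.d. inputs from D_t and form the simple-task dataset S_t of pairs (x, f_t(x)); independently draw k_c i.i.d. inputs x_1,…,x_{k_c}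 from D_0 and form the chain-of-thought composite dataset S_0 of full chains (z_1(x_i), z_2(x_i), …, z_{T+1}(x_i)), where z_{T+1}(x) = f_0(x). Let 0 < δ < 1 and suppose max(k_c, k_t) ≥ (1/ε_0)·(ln|H| + ln(T/δ)) for every t ∈ {1,…,T}. Then with probability at least 1 − δ over all the datasets, for every t ∈ {1,…,T}, the only g ∈ H satisfying g(x) = y for all (x,y) ∈ S_t and g(z_t(x_i)) = z_{t+1}(x_i) for all i ∈ {1,…,k_c} is g = f_t; consequently, the learning rule that outputs the composition ĥ_T ∘ ⋯ ∘ ĥ_1 of per-step consistent hypotheses ĥ_t ∈ H outputs exactly f_0. -/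
open scoped ENNReal

noncomputable def chi (p : Prop) : ℝ≥0∞ := by classical exact if p then 1 else 0

lemma chi_of_true {p : Prop} (h : p) : chi p = 1 := by simp [chi, h]
lemma chi_add_not (p : Prop) : chi p + chi (¬p) = 1 := by
  by_cases h : p <;> simp [chi, h]

lemma tsum_pi_fin : ∀ {n : ℕ} {α : Fin n → Type*} (F : ∀ i, α i → ℝ≥0∞),
    ∑' f : (∀ i, α i), ∏ i, F i (f i) = ∏ i, ∑' x, F i x := by
  intro n
  induction n with
  | zero =>
    intro α F
    simp only [Finset.univ_eq_empty, Finset.prod_empty]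
    exact (tsum_eq_single default (fun b hb => absurd (Subsingleton.elim b default) hb)).trans rfl
  | succ n ih =>
    intro α F
    rw [← (Fin.consEquiv α).tsum_eq, ENNReal.tsum_prod']
    simp only [Fin.consEquiv_apply]
    calc ∑' (a : α 0) (g : ∀ i : Fin n, α i.succ), ∏ i, F i (Fin.cons a g i)
        = ∑' (a : α 0) (g : ∀ i : Fin n, α i.succ), F 0 a * ∏ i : Fin n, F i.succ (g i) := by
          congr 1; funext a; congr 1; funext g
          rw [Fin.prod_univ_succ]; simp
      _ = (∑' a : α 0, F 0 a) * ∏ i : Fin n, ∑' x, F i.succ x := by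
          simp_rw [ENNReal.tsum_mul_left, ih, ENNReal.tsum_mul_right]
      _ = ∏ i, ∑' x, F i x := by rw [Fin.prod_univ_succ]

lemma tsum_W_eq {T : ℕ} {k : Fin T → ℕ} {kc : ℕ} {X : Type*}
    (A : ∀ t : Fin T, Fin (k t) → X → ℝ≥0∞) (B : Fin kc → X → ℝ≥0∞) :
    ∑' w : ((t : Fin T) → Fin (k t) → X) × (Fin kc → X),
      (∏ t, ∏ i, A t i (w.1 t i)) * ∏ i, B i (w.2 i)
    = (∏ t, ∏ i, ∑' x, A t i x) * ∏ i, ∑' x, B i x := by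
  rw [ENNReal.tsum_prod']
  simp_rw [ENNReal.tsum_mul_left, tsum_pi_fin (fun i => B i), ENNReal.tsum_mul_right]
  congr 1
  rw [tsum_pi_fin (fun t (ft : Fin (k t) → X) => ∏ i, A t i (ft i))]
  exact Finset.prod_congr rfl fun t _ => tsum_pi_fin (fun i => A t i)

lemma tsum_mul_chi_le {X : Type*} (p : PMF X) (P : X → Prop) {ε : ℝ≥0∞} (hεtop : ε ≠ ⊤)
    (hε : ε < p.toOuterMeasure {x | ¬ P x}) :
    (∑' x, p x * chi (P x)) ≤ 1 - ε := by
  have hc : p.toOuterMeasure {x | ¬ P x} = ∑' x, p x * chi (¬ P x) := by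
    rw [PMF.toOuterMeasure_apply]
    refine tsum_congr fun x => ?_
    by_cases h : P x <;> simp [Set.indicator_apply, chi, h]
  have h1 : (∑' x, p x * chi (P x)) + p.toOuterMeasure {x | ¬ P x} = 1 := by
    rw [hc, ← ENNReal.tsum_add]
    simp_rw [← mul_add, chi_add_not, mul_one]
    exact p.tsum_coe
  refine ENNReal.le_sub_of_add_le_right hεtop ?_
  calc (∑' x, p x * chi (P x)) + ε ≤ (∑' x, p x * chi (P x)) + p.toOuterMeasure {x | ¬ P x} :=
        add_le_add le_rfl hε.le
    _ = 1 := h1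

lemma bad_event_bound {X : Type*} {T : ℕ} (k : Fin T → ℕ) (kc : ℕ)
    (D : Fin T → PMF X) (D₀ : PMF X)
    (t : Fin T) (f g : X → X) (zt : X → X) (ε : ℝ≥0∞) (hεtop : ε ≠ ⊤)
    (h1 : ε < (D t).toOuterMeasure {x | ¬ (g x = f x)})
    (h2 : ε < D₀.toOuterMeasure {x | ¬ (g (zt x) = f (zt x))}) :
    ∑' w : ((t : Fin T) → Fin (k t) → X) × (Fin kc → X),
      Set.indicator {w : ((t : Fin T) → Fin (k t) → X) × (Fin kc → X) |
          (∀ i, g (w.1 t i) = f (w.1 t i)) ∧ ∀ i, g (zt (w.2 i)) = f (zt (w.2 i))}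
        (fun w => (∏ t', ∏ i, D t' (w.1 t' i)) * ∏ i, D₀ (w.2 i)) w
      ≤ (1 - ε) ^ (k t) * (1 - ε) ^ kc := by
  classical
  set A : ∀ t' : Fin T, Fin (k t') → X → ℝ≥0∞ :=
    fun t' _ x => D t' x * (if t' = t then chi (g x = f x) else 1) with hA
  set B : Fin kc → X → ℝ≥0∞ := fun _ x => D₀ x * chi (g (zt x) = f (zt x)) with hB
  have hpt : ∀ w : ((t : Fin T) → Fin (k t) → X) × (Fin kc → X),
      Set.indicator {w : ((t : Fin T) → Fin (k t) → X) × (Fin kc → X) |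
          (∀ i, g (w.1 t i) = f (w.1 t i)) ∧ ∀ i, g (zt (w.2 i)) = f (zt (w.2 i))}
        (fun w => (∏ t', ∏ i, D t' (w.1 t' i)) * ∏ i, D₀ (w.2 i)) w
      ≤ (∏ t', ∏ i, A t' i (w.1 t' i)) * ∏ i, B i (w.2 i) := by
    intro w
    rw [Set.indicator_apply]
    split_ifs with hw
    · apply le_of_eq
      congr 1
      · refine Finset.prod_congr rfl fun t' _ => Finset.prod_congr rfl fun i _ => ?_
        simp only [hA]
        split_ifs with ht
        · subst ht; rw [chi_of_true (hw.1 i), mul_one]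
        · rw [mul_one]
      · refine Finset.prod_congr rfl fun i _ => ?_
        simp only [hB]
        rw [chi_of_true (hw.2 i), mul_one]
    · exact zero_le
  refine le_trans (Summable.tsum_le_tsum hpt ENNReal.summable ENNReal.summable) ?_
  rw [tsum_W_eq]
  have hAt : ∀ t' : Fin T, ∀ i : Fin (k t'), (∑' x, A t' i x)
      = if t' = t then ∑' x, D t x * chi (g x = f x) else 1 := by
    intro t' i
    simp only [hA]
    split_ifs with ht
    · subst ht; rfl
    · simp_rw [mul_one]; exact (D t').tsum_coe
  have hprod1 : (∏ t', ∏ i, ∑' x, A t' i x) = (∑' x, D t x * chi (g x = f x)) ^ (k t) := by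
    have : ∀ t' : Fin T, (∏ i : Fin (k t'), ∑' x, A t' i x)
        = (if t' = t then ∑' x, D t x * chi (g x = f x) else 1) ^ (k t') := by
      intro t'
      rw [Finset.prod_congr rfl fun i _ => hAt t' i, Finset.prod_const, Finset.card_univ,
        Fintype.card_fin]
    rw [Finset.prod_congr rfl fun t' _ => this t']
    rw [Finset.prod_eq_single t (fun t' _ ht' => by simp [ht']) (by simp)]
    simp
  have hprod2 : (∏ i : Fin kc, ∑' x, B i x) = (∑' x, D₀ x * chi (g (zt x) = f (zt x))) ^ kc := by
    simp only [hB]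
    rw [Finset.prod_const, Finset.card_univ, Fintype.card_fin]
  rw [hprod1, hprod2]
  have hp := tsum_mul_chi_le (D t) (fun x => g x = f x) hεtop h1
  have hq := tsum_mul_chi_le D₀ (fun x => g (zt x) = f (zt x)) hεtop h2
  exact mul_le_mul' (pow_le_pow_left' hp _) (pow_le_pow_left' hq _)

lemma real_bound (m : ℕ) (Tr Hr ε δ : ℝ) (hT : 1 ≤ Tr) (hH : 1 ≤ Hr)
    (hε0 : 0 < ε) (hε1 : ε < 1) (hδ0 : 0 < δ)
    (hm : (1 / ε) * (Real.log Hr + Real.log (Tr / δ)) ≤ m) :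
    (1 - ε) ^ m ≤ δ / (Tr * Hr) := by
  have hT0 : (0:ℝ) < Tr := by linarith
  have hH0 : (0:ℝ) < Hr := by linarith
  have h1 : (1 - ε) ^ m ≤ Real.exp (-ε) ^ m := by
    apply pow_le_pow_left₀ (by linarith)
    linarith [Real.add_one_le_exp (-ε)]
  refine h1.trans ?_
  rw [← Real.exp_nat_mul]
  rw [show δ / (Tr * Hr) = Real.exp (Real.log (δ / (Tr * Hr))) from
    (Real.exp_log (by positivity)).symm]
  apply Real.exp_le_exp.2
  have hlog : Real.log (δ / (Tr * Hr)) = -(Real.log Hr + Real.log (Tr / δ)) := by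
    rw [Real.log_div (ne_of_gt hδ0) (by positivity), Real.log_mul (ne_of_gt hT0) (ne_of_gt hH0),
      Real.log_div (ne_of_gt hT0) (ne_of_gt hδ0)]
    ring
  rw [hlog]
  have h2 : (1 / ε) * (Real.log Hr + Real.log (Tr / δ)) * ε ≤ (m : ℝ) * ε :=
    mul_le_mul_of_nonneg_right hm hε0.le
  have h3 : (1 / ε) * (Real.log Hr + Real.log (Tr / δ)) * ε
      = Real.log Hr + Real.log (Tr / δ) := by field_simp
  nlinarith

/-- `compChain fs` is the composite function `f_T ∘ ⋯ ∘ f_2 ∘ f_1` where `f_{t+1} = fs t`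
(i.e. `fs 0` is applied first). -/
def compChain {X : Type*} {T : ℕ} (fs : Fin T → (X → X)) (x : X) : X :=
  (List.ofFn fs).foldl (fun a g => g a) x

/-- `partialChain fs t x` is the intermediate value `z_{t+1}(x) = f_t ∘ ⋯ ∘ f_1 (x)`
of the chain of thought on input `x` (so `partialChain fs 0 x = x`). -/
def partialChain {X : Type*} {T : ℕ} (fs : Fin T → (X → X)) (t : ℕ) (x : X) : X :=
  ((List.ofFn fs).take t).foldl (fun a g => g a) x

lemma partialChain_succ {X : Type*} {T : ℕ} (fs : Fin T → (X → X)) (t : Fin T) (x : X) :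
    partialChain fs ((t : ℕ) + 1) x = fs t (partialChain fs t x) := by
  unfold partialChain
  rw [List.take_succ, List.foldl_append]
  simp [List.getElem?_ofFn, t.isLt]

/-- Learning a `T`-step composition from per-step simple-task examples
(`k t` i.i.d. draws from `D t`, labeled by `f_t = fs t`) together with `k_c`
chain-of-thought composite examples (i.i.d. draws from `D₀`, providing for each step `t`
the pair `(z_t, z_{t+1})`).  If `H` is `ε₀`-distinguishable under each `D t` and under
each pushforward of `D₀` by `z_t`, and `max(k_c, k_t) ≥ (1/ε₀)(ln|H| + ln(T/δ))` for
every `t`, then with probability at least `1 − δ` over all datasets, for every step `t`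
the only `g ∈ H` consistent with both the simple-task examples and the step-`t` pairs
is `fs t`; consequently any composition of per-step consistent hypotheses equals the
target composition `f₀ = compChain fs`. -/
theorem expcot_identification {V : Type*} [Fintype V] [Nonempty V]
    (H : Finset (List V → List V)) (hH : H.Nonempty)
    (T : ℕ) (hT : 1 ≤ T) (fs : Fin T → (List V → List V)) (hfs : ∀ t, fs t ∈ H)
    (D : Fin T → PMF (List V)) (D₀ : PMF (List V)) (ε₀ : ℝ) (hε₀ : 0 < ε₀)
    (hdist : ∀ f ∈ H, ∀ g ∈ H, f ≠ g → ∀ t : Fin T,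
      ENNReal.ofReal ε₀ < (D t).toOuterMeasure {x | f x ≠ g x})
    (hdist₀ : ∀ f ∈ H, ∀ g ∈ H, f ≠ g → ∀ t : Fin T,
      ENNReal.ofReal ε₀ <
        D₀.toOuterMeasure {x | f (partialChain fs t x) ≠ g (partialChain fs t x)})
    (k : Fin T → ℕ) (kc : ℕ) (δ : ℝ) (hδ0 : 0 < δ) (hδ1 : δ < 1)
    (hk : ∀ t : Fin T,
      (1 / ε₀) * (Real.log H.card + Real.log ((T : ℝ) / δ)) ≤ (max kc (k t) : ℝ)) :
    1 - δ ≤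
      (∑' w : ((t : Fin T) → Fin (k t) → List V) × (Fin kc → List V),
        Set.indicator
          {w : ((t : Fin T) → Fin (k t) → List V) × (Fin kc → List V) |
            (∀ t : Fin T, ∀ g ∈ H,
              ((∀ i, g (w.1 t i) = fs t (w.1 t i)) ∧
                (∀ i, g (partialChain fs t (w.2 i)) =
                  partialChain fs ((t : ℕ) + 1) (w.2 i))) → g = fs t) ∧
            ∀ h : Fin T → (List V → List V),
              (∀ t : Fin T, h t ∈ H ∧
                (∀ i, h t (w.1 t i) = fs t (w.1 t i)) ∧
                (∀ i, h t (partialChain fs t (w.2 i)) =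
                  partialChain fs ((t : ℕ) + 1) (w.2 i))) →
              compChain h = compChain fs}
          (fun w => (∏ t, ∏ i, D t (w.1 t i)) * ∏ i, D₀ (w.2 i)) w).toReal := by
  classical
  set μ : ((t : Fin T) → Fin (k t) → List V) × (Fin kc → List V) → ℝ≥0∞ :=
    fun w => (∏ t, ∏ i, D t (w.1 t i)) * ∏ i, D₀ (w.2 i) with hμ
  set E : Set (((t : Fin T) → Fin (k t) → List V) × (Fin kc → List V)) :=
    {w | (∀ t : Fin T, ∀ g ∈ H,
        ((∀ i, g (w.1 t i) = fs t (w.1 t i)) ∧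
          (∀ i, g (partialChain fs t (w.2 i)) = partialChain fs ((t : ℕ) + 1) (w.2 i))) →
        g = fs t) ∧
      ∀ h : Fin T → (List V → List V),
        (∀ t : Fin T, h t ∈ H ∧ (∀ i, h t (w.1 t i) = fs t (w.1 t i)) ∧
          (∀ i, h t (partialChain fs t (w.2 i)) = partialChain fs ((t : ℕ) + 1) (w.2 i))) →
        compChain h = compChain fs} with hE
  set E₁ : Set (((t : Fin T) → Fin (k t) → List V) × (Fin kc → List V)) :=
    {w | ∀ t : Fin T, ∀ g ∈ H,
        ((∀ i, g (w.1 t i) = fs t (w.1 t i)) ∧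
          (∀ i, g (partialChain fs t (w.2 i)) = partialChain fs ((t : ℕ) + 1) (w.2 i))) →
        g = fs t} with hE₁
  set A : Fin T → (List V → List V) →
      Set (((t : Fin T) → Fin (k t) → List V) × (Fin kc → List V)) :=
    fun t g => {w | (∀ i, g (w.1 t i) = fs t (w.1 t i)) ∧
      ∀ i, g (partialChain fs t (w.2 i)) = fs t (partialChain fs t (w.2 i))} with hAdef
  have htotal : ∑' w, μ w = 1 := by
    have h := tsum_W_eq (T := T) (k := k) (kc := kc) (X := List V)
      (fun t _ x => D t x) (fun _ x => D₀ x)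
    simpa [hμ, PMF.tsum_coe] using h
  have hsub : E₁ ⊆ E := by
    intro w hw
    refine ⟨hw, fun h hh => ?_⟩
    have : h = fs := funext fun t => hw t (h t) (hh t).1 ⟨(hh t).2.1, (hh t).2.2⟩
    rw [this]
  have hEle : ∑' w, E₁.indicator μ w ≤ ∑' w, E.indicator μ w :=
    Summable.tsum_le_tsum (fun w => Set.indicator_le_indicator_of_subset hsub (fun _ => zero_le) w)
      ENNReal.summable ENNReal.summable
  have hcompl : ∑' w, E₁.indicator μ w + ∑' w, E₁ᶜ.indicator μ w = 1 := by
    rw [← ENNReal.tsum_add, ← htotal]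
    exact tsum_congr fun w => congrFun (Set.indicator_self_add_compl E₁ μ) w
  -- per-(t,g) bound
  have hTR : (1:ℝ) ≤ (T : ℝ) := by exact_mod_cast hT
  have hHR : (1:ℝ) ≤ (H.card : ℝ) := by exact_mod_cast hH.card_pos
  have hstep : ∀ t : Fin T, ∀ g ∈ H.erase (fs t),
      ∑' w, (A t g).indicator μ w ≤ ENNReal.ofReal (δ / (T * H.card)) := by
    intro t g hg
    obtain ⟨hne, hgH⟩ := Finset.mem_erase.1 hg
    have hd1 : ENNReal.ofReal ε₀ < (D t).toOuterMeasure {x | ¬ (g x = fs t x)} := by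
      have := hdist (fs t) (hfs t) g hgH (Ne.symm hne) t
      convert this using 2
      ext x; exact ⟨fun h => Ne.symm h, fun h => Ne.symm h⟩
    have hd2 : ENNReal.ofReal ε₀ <
        D₀.toOuterMeasure {x | ¬ (g (partialChain fs t x) = fs t (partialChain fs t x))} := by
      have := hdist₀ (fs t) (hfs t) g hgH (Ne.symm hne) t
      convert this using 2
      ext x; exact ⟨fun h => Ne.symm h, fun h => Ne.symm h⟩
    have hb := bad_event_bound (X := List V) k kc D D₀ t (fs t) g (partialChain fs t)
      (ENNReal.ofReal ε₀) ENNReal.ofReal_ne_top hd1 hd2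
    have hmeas1 : (D t).toOuterMeasure {x | ¬ (g x = fs t x)} ≤ 1 := by
      rw [PMF.toOuterMeasure_apply]
      exact le_trans (Summable.tsum_le_tsum (fun x => Set.indicator_le_self _ _ x)
        ENNReal.summable ENNReal.summable) (le_of_eq (D t).tsum_coe)
    have hε1 : ε₀ < 1 := by
      have := lt_of_lt_of_le hd1 hmeas1
      exact ENNReal.ofReal_lt_one.1 this
    have hone : (1 : ℝ≥0∞) - ENNReal.ofReal ε₀ = ENNReal.ofReal (1 - ε₀) := by
      rw [ENNReal.ofReal_sub _ hε₀.le, ENNReal.ofReal_one]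
    set m := max kc (k t) with hm
    calc ∑' w, (A t g).indicator μ w
        ≤ (1 - ENNReal.ofReal ε₀) ^ (k t) * (1 - ENNReal.ofReal ε₀) ^ kc := hb
      _ = (1 - ENNReal.ofReal ε₀) ^ (k t + kc) := (pow_add _ _ _).symm
      _ ≤ (1 - ENNReal.ofReal ε₀) ^ m := by
          apply pow_le_pow_of_le_one (zero_le) tsub_le_self
          exact max_le (Nat.le_add_left kc (k t)) (Nat.le_add_right (k t) kc)
      _ = ENNReal.ofReal ((1 - ε₀) ^ m) := by
          rw [hone, ENNReal.ofReal_pow (by linarith)]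
      _ ≤ ENNReal.ofReal (δ / (T * H.card)) := by
          apply ENNReal.ofReal_le_ofReal
          apply real_bound m (T : ℝ) (H.card : ℝ) ε₀ δ hTR hHR hε₀ hε1 hδ0
          have := hk t
          rw [hm]
          exact_mod_cast this
  -- union bound
  have hbad : ∑' w, E₁ᶜ.indicator μ w ≤ ENNReal.ofReal δ := by
    have hpt : ∀ w, E₁ᶜ.indicator μ w ≤
        ∑ t : Fin T, ∑ g ∈ H.erase (fs t), (A t g).indicator μ w := by
      intro w
      rw [Set.indicator_apply]
      split_ifs with hw
      · simp only [hE₁, Set.mem_compl_iff, Set.mem_setOf_eq] at hw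
        push_neg at hw
        obtain ⟨t₀, g₀, hg₀H, hcons, hne⟩ := hw
        have hmem : w ∈ A t₀ g₀ := by
          refine ⟨hcons.1, fun i => ?_⟩
          have := hcons.2 i
          rwa [partialChain_succ fs t₀ (w.2 i)] at this
        calc μ w = (A t₀ g₀).indicator μ w := (Set.indicator_of_mem hmem μ).symm
          _ ≤ ∑ g ∈ H.erase (fs t₀), (A t₀ g).indicator μ w :=
              Finset.single_le_sum (f := fun g => (A t₀ g).indicator μ w)
                (fun _ _ => zero_le) (Finset.mem_erase.2 ⟨hne, hg₀H⟩)
          _ ≤ ∑ t : Fin T, ∑ g ∈ H.erase (fs t), (A t g).indicator μ w :=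
              Finset.single_le_sum (f := fun t => ∑ g ∈ H.erase (fs t), (A t g).indicator μ w)
                (fun _ _ => zero_le) (Finset.mem_univ t₀)
      · exact zero_le
    refine le_trans (Summable.tsum_le_tsum hpt ENNReal.summable ENNReal.summable) ?_
    rw [Summable.tsum_finsetSum fun _ _ => ENNReal.summable]
    have hswap : ∀ t : Fin T, ∑' w, ∑ g ∈ H.erase (fs t), (A t g).indicator μ w
        = ∑ g ∈ H.erase (fs t), ∑' w, (A t g).indicator μ w :=
      fun t => Summable.tsum_finsetSum fun _ _ => ENNReal.summable
    rw [Finset.sum_congr rfl fun t _ => hswap t]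
    have hterm : ∀ t : Fin T, ∑ g ∈ H.erase (fs t), ∑' w, (A t g).indicator μ w
        ≤ (H.card : ℝ≥0∞) * ENNReal.ofReal (δ / (T * H.card)) := by
      intro t
      calc ∑ g ∈ H.erase (fs t), ∑' w, (A t g).indicator μ w
          ≤ ∑ _g ∈ H.erase (fs t), ENNReal.ofReal (δ / (T * H.card)) :=
            Finset.sum_le_sum fun g hg => hstep t g hg
        _ = ((H.erase (fs t)).card : ℝ≥0∞) * ENNReal.ofReal (δ / (T * H.card)) := by
            rw [Finset.sum_const, nsmul_eq_mul]
        _ ≤ (H.card : ℝ≥0∞) * ENNReal.ofReal (δ / (T * H.card)) :=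
            mul_le_mul_left (by exact_mod_cast Nat.cast_le.2 (Finset.card_erase_le)) _
    calc ∑ t : Fin T, ∑ g ∈ H.erase (fs t), ∑' w, (A t g).indicator μ w
        ≤ ∑ _t : Fin T, (H.card : ℝ≥0∞) * ENNReal.ofReal (δ / (T * H.card)) :=
          Finset.sum_le_sum fun t _ => hterm t
      _ = (T : ℝ≥0∞) * ((H.card : ℝ≥0∞) * ENNReal.ofReal (δ / (T * H.card))) := by
          rw [Finset.sum_const, Finset.card_univ, Fintype.card_fin, nsmul_eq_mul]
      _ = ENNReal.ofReal δ := by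
          rw [← ENNReal.ofReal_natCast (H.card), ← ENNReal.ofReal_natCast T,
            ← ENNReal.ofReal_mul (by positivity), ← ENNReal.ofReal_mul (by positivity)]
          congr 1
          have hT0 : (0:ℝ) < (T:ℝ) := by linarith
          have hH0 : (0:ℝ) < (H.card:ℝ) := by linarith
          field_simp
  have hmain : 1 - ENNReal.ofReal δ ≤ ∑' w, E.indicator μ w := by
    refine le_trans ?_ hEle
    rw [tsub_le_iff_right]
    calc (1:ℝ≥0∞) = ∑' w, E₁.indicator μ w + ∑' w, E₁ᶜ.indicator μ w := hcompl.symm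
      _ ≤ ∑' w, E₁.indicator μ w + ENNReal.ofReal δ := add_le_add le_rfl hbad
  have hfin : ∑' w, E.indicator μ w ≤ 1 := by
    rw [← htotal]
    exact Summable.tsum_le_tsum (fun w => Set.indicator_le_self _ _ w) ENNReal.summable ENNReal.summable
  have hres := ENNReal.toReal_mono (ne_top_of_le_ne_top ENNReal.one_ne_top hfin) hmain
  have heq : (1 - ENNReal.ofReal δ).toReal = 1 - δ := by
    rw [← ENNReal.ofReal_one, ← ENNReal.ofReal_sub _ hδ0.le,
      ENNReal.toReal_ofReal (by linarith)]
  rw [heq] at hres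
  exact hres
end
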